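/- Let d, K ∈ ℕ with K ≥ 1, e, h ∈ ℝ with e < h, R ≥ 0, and let ν := ((volume B₀)⁻¹ • volume.restrict B₀) be the uniform probability measure on B₀ := Set.univ.pi (fun i => Set.Icc e h) ⊆ (Fin d → ℝ). Let f : (Fin d → ℝ) → ℕ be measurable, ŷ ∈ ℕ, x, r : Fin K → (Fin d → ℝ) with ‖r k‖₂ ≤ R for all k, and let W ∈ [0,1], τ ∈ ℝ. If (ν {ε | f (x k + r k + ε) = ŷ}).toReal ≥ W for every k, and W > τ + 1 − (max 0 (1 − R / (h − e)))^d, then (ν {ε | f (x k + ε) = ŷ}).toReal > τ for every k. -/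

import Mathlib

open MeasureTheory
open scoped ENNReal

/-- Example 2 (Robustness Conditions under Uniform Distribution), guarantee direction:
if the watermark robustness `W` exceeds `τ + 1 − (1 − R/(h−e))₊^d`, then the stability
exceeds `τ`. -/
theorem certified_watermark_uniform (d K : ℕ) (hK : 1 ≤ K)
    (e h : ℝ) (heh : e < h) (R : ℝ) (hR : 0 ≤ R)
    (f : (Fin d → ℝ) → ℕ) (hf : Measurable f) (yhat : ℕ)
    (x r : Fin K → (Fin d → ℝ)) (hr : ∀ k, Real.sqrt (∑ i, (r k i) ^ 2) ≤ R)
    (W : ℝ) (hW : W ∈ Set.Icc (0 : ℝ) 1) (τ : ℝ)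
    (hWR : ∀ k, ((((volume (Set.univ.pi fun _ : Fin d => Set.Icc e h))⁻¹ •
          volume.restrict (Set.univ.pi fun _ : Fin d => Set.Icc e h))
        {ε : Fin d → ℝ | f (x k + r k + ε) = yhat}).toReal ≥ W))
    (hcond : W > τ + 1 - (max 0 (1 - R / (h - e))) ^ d) :
    ∀ k, ((((volume (Set.univ.pi fun _ : Fin d => Set.Icc e h))⁻¹ •
          volume.restrict (Set.univ.pi fun _ : Fin d => Set.Icc e h))
        {ε : Fin d → ℝ | f (x k + ε) = yhat}).toReal > τ) := by
  intro k
  have hV0 : (0:ℝ) < h - e := sub_pos.mpr heh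
  set B : Set (Fin d → ℝ) := Set.univ.pi fun _ : Fin d => Set.Icc e h with hBdef
  have hBm : MeasurableSet B := MeasurableSet.univ_pi fun i => measurableSet_Icc
  have hvolB : volume B = (ENNReal.ofReal (h - e)) ^ d := by
    rw [hBdef, volume_pi_pi]; simp [Real.volume_Icc]
  have hBfin : volume B ≠ ∞ := by rw [hvolB]; exact (ENNReal.pow_ne_top ENNReal.ofReal_ne_top)
  have hBtoReal : (volume B).toReal = (h - e) ^ d := by
    rw [hvolB, ← ENNReal.ofReal_pow hV0.le, ENNReal.toReal_ofReal (pow_nonneg hV0.le _)]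
  set S : Set (Fin d → ℝ) := {ε | f (x k + r k + ε) = yhat} with hSdef
  set A : Set (Fin d → ℝ) := {ε | f (x k + ε) = yhat} with hAdef
  have hSm : MeasurableSet S := (hf.comp (measurable_const_add (x k + r k)))
    (measurableSet_singleton yhat)
  have hAm : MeasurableSet A := (hf.comp (measurable_const_add (x k)))
    (measurableSet_singleton yhat)
  set B' : Set (Fin d → ℝ) := ((· + r k) : (Fin d → ℝ) → _) ⁻¹' B with hB'def
  have hB'm : MeasurableSet B' := (measurable_add_const (r k)) hBm
  -- bound on |r k i|
  have hri : ∀ i, |r k i| ≤ R := by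
    intro i
    refine le_trans ?_ (hr k)
    rw [← Real.sqrt_sq_eq_abs]
    exact Real.sqrt_le_sqrt (Finset.single_le_sum (fun j _ => sq_nonneg (r k j)) (Finset.mem_univ i))
  -- geometric inclusion
  have hincl : S ∩ B ∩ B' ⊆ ((· + r k) : (Fin d → ℝ) → _) ⁻¹' (A ∩ B) := by
    rintro z ⟨⟨hzS, _⟩, hzB'⟩
    refine ⟨?_, hzB'⟩
    show f (x k + (z + r k)) = yhat
    have : x k + (z + r k) = x k + r k + z := by abel
    rw [this]; exact hzS
  have hkey : volume (S ∩ B ∩ B') ≤ volume (A ∩ B) := by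
    calc volume (S ∩ B ∩ B') ≤ volume (((· + r k) : (Fin d → ℝ) → _) ⁻¹' (A ∩ B)) :=
          measure_mono hincl
      _ = volume (A ∩ B) := measure_preimage_add_right volume (r k) _
  -- S ∩ B ⊆ (S ∩ B ∩ B') ∪ (B \ B')
  have hcover : S ∩ B ⊆ (S ∩ B ∩ B') ∪ (B \ B') := by
    rintro z ⟨hzS, hzB⟩
    by_cases hz : z ∈ B'
    · exact Or.inl ⟨⟨hzS, hzB⟩, hz⟩
    · exact Or.inr ⟨hzB, hz⟩
  have hSB : volume (S ∩ B) ≤ volume (A ∩ B) + volume (B \ B') :=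
    le_trans (measure_mono hcover) (le_trans (measure_union_le _ _) (add_le_add hkey le_rfl))
  -- compute B ∩ B'
  have hBB' : B ∩ B' = Set.univ.pi fun i : Fin d =>
      Set.Icc (max e (e - r k i)) (min h (h - r k i)) := by
    ext z
    simp only [hBdef, hB'def, Set.mem_inter_iff, Set.mem_preimage, Set.mem_pi, Set.mem_univ,
      Set.mem_Icc, forall_true_left, Pi.add_apply]
    constructor
    · rintro ⟨h1, h2⟩ i
      exact ⟨max_le (h1 i).1 (by linarith [(h2 i).1]), le_min (h1 i).2 (by linarith [(h2 i).2])⟩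
    · intro h1
      constructor
      · intro i
        exact ⟨(le_max_left _ _).trans (h1 i).1, (h1 i).2.trans (min_le_left _ _)⟩
      · intro i
        constructor
        · have := (le_max_right e (e - r k i)).trans (h1 i).1; linarith
        · have := (h1 i).2.trans (min_le_right h (h - r k i)); linarith
  have hvolBB' : volume (B ∩ B') = ∏ i : Fin d, ENNReal.ofReal (min h (h - r k i) - max e (e - r k i)) := by
    rw [hBB', volume_pi_pi]
    simp [Real.volume_Icc]
  set m : ℝ := max 0 (1 - R / (h - e)) with hmdef
  have hm0 : 0 ≤ m := le_max_left _ _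
  have hmval : (h - e) * m = max 0 (h - e - R) := by
    rcases le_total (h - e - R) 0 with hc | hc
    · have h1 : 1 - R / (h - e) ≤ 0 := by
        rw [sub_nonpos, le_div_iff₀ hV0]; linarith
      rw [hmdef, max_eq_left h1, mul_zero, max_eq_left hc]
    · have h1 : 0 ≤ 1 - R / (h - e) := by
        rw [sub_nonneg, div_le_one hV0]; linarith
      rw [hmdef, max_eq_right h1, max_eq_right hc, mul_sub, mul_one,
        mul_div_cancel₀ _ hV0.ne']
  have hfac : ∀ i : Fin d, ENNReal.ofReal ((h - e) * m) ≤
      ENNReal.ofReal (min h (h - r k i) - max e (e - r k i)) := by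
    intro i
    rcases le_total (h - e - R) 0 with hc | hc
    · rw [hmval, max_eq_left hc, ENNReal.ofReal_zero]; exact zero_le
    · apply ENNReal.ofReal_le_ofReal
      rw [hmval, max_eq_right hc]
      have habs := hri i
      rcases le_total 0 (r k i) with hc2 | hc2
      · rw [abs_of_nonneg hc2] at habs
        rw [min_eq_right (by linarith), max_eq_left (by linarith)]; linarith
      · rw [abs_of_nonpos hc2] at habs
        rw [min_eq_left (by linarith), max_eq_right (by linarith)]; linarith
  have hvolBB'_ge : ENNReal.ofReal (((h - e) * m) ^ d) ≤ volume (B ∩ B') := by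
    rw [hvolBB', ENNReal.ofReal_pow (mul_nonneg hV0.le hm0)]
    calc ENNReal.ofReal ((h - e) * m) ^ d
        = ∏ _i : Fin d, ENNReal.ofReal ((h - e) * m) := by
          rw [Finset.prod_const, Finset.card_univ, Fintype.card_fin]
      _ ≤ _ := Finset.prod_le_prod' fun i _ => hfac i
  -- finiteness facts
  have hfinSB : volume (S ∩ B) ≠ ∞ := (lt_of_le_of_lt (measure_mono Set.inter_subset_right) hBfin.lt_top).ne
  have hfinAB : volume (A ∩ B) ≠ ∞ := (lt_of_le_of_lt (measure_mono Set.inter_subset_right) hBfin.lt_top).ne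
  have hfinD : volume (B \ B') ≠ ∞ := (lt_of_le_of_lt (measure_mono Set.diff_subset) hBfin.lt_top).ne
  have hfinBB' : volume (B ∩ B') ≠ ∞ := (lt_of_le_of_lt (measure_mono Set.inter_subset_left) hBfin.lt_top).ne
  -- real versions
  set a : ℝ := (volume (A ∩ B)).toReal with hadef
  set s : ℝ := (volume (S ∩ B)).toReal with hsdef
  set q : ℝ := (volume (B ∩ B')).toReal with hqdef
  have hsa : s ≤ a + (volume (B \ B')).toReal := by
    rw [hsdef, hadef, ← ENNReal.toReal_add hfinAB hfinD]
    exact ENNReal.toReal_mono (ENNReal.add_ne_top.mpr ⟨hfinAB, hfinD⟩) hSB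
  have hDval : volume (B \ B') = volume B - volume (B ∩ B') := by
    rw [← measure_diff (Set.inter_subset_left) (hBm.inter hB'm).nullMeasurableSet hfinBB']
    congr 1
    rw [Set.diff_self_inter]
  have hDreal : (volume (B \ B')).toReal = (h - e) ^ d - q := by
    rw [hDval, ENNReal.toReal_sub_of_le (measure_mono Set.inter_subset_left) hBfin, hBtoReal, hqdef]
  have hq_ge : ((h - e) * m) ^ d ≤ q := by
    rw [hqdef]
    have := ENNReal.toReal_mono hfinBB' hvolBB'_ge
    rwa [ENNReal.toReal_ofReal (by positivity)] at this
  -- unpack hypothesis and goal in terms of s, a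
  have hrestrict : ∀ (T : Set (Fin d → ℝ)), MeasurableSet T →
      (((volume B)⁻¹ • volume.restrict B) T).toReal = ((h - e) ^ d)⁻¹ * (volume (T ∩ B)).toReal := by
    intro T hT
    rw [Measure.smul_apply, Measure.restrict_apply hT, smul_eq_mul, ENNReal.toReal_mul,
      ENNReal.toReal_inv, hBtoReal]
  have hWk := hWR k
  rw [hrestrict S hSm] at hWk
  rw [hrestrict A hAm]
  -- arithmetic finish
  have hVpow : (0:ℝ) < (h - e) ^ d := pow_pos hV0 d
  have hs_ge : W * (h - e) ^ d ≤ s := by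
    have := mul_le_mul_of_nonneg_left hWk hVpow.le
    rw [mul_comm, ← mul_assoc, mul_inv_cancel₀ hVpow.ne', one_mul] at this
    linarith [this]
  have hmq : (h - e) ^ d * m ^ d ≤ q := by
    rw [mul_pow] at hq_ge; exact hq_ge
  have hfinal : τ * (h - e) ^ d < a := by
    nlinarith [hsa, hDreal, hs_ge, hmq, mul_pos (sub_pos.mpr hcond) hVpow]
  calc τ = ((h - e) ^ d)⁻¹ * (τ * (h - e) ^ d) := by field_simp
    _ < ((h - e) ^ d)⁻¹ * a := mul_lt_mul_of_pos_left hfinal (inv_pos.mpr hVpow)
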